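/- For every λ > 0 and every x ∈ (0,1), one has I₀(√λ · x) / I₀(√λ) > exp(-√λ·(1-x)), where I₀ is the modified Bessel function of the first kind of order 0. -/

import Mathlib

open Real MeasureTheory

/-- The modified Bessel function of the first kind of order `0`,
`I₀(x) = ∑ₖ (x/2)^(2k) / (k!)²`. -/
noncomputable def besselI0 (x : ℝ) : ℝ :=
  ∑' k : ℕ, (x / 2) ^ (2 * k) / ((Nat.factorial k : ℝ)) ^ 2

lemma besselI0_summable (x : ℝ) :
    Summable (fun k : ℕ => (x / 2) ^ (2 * k) / ((Nat.factorial k : ℝ)) ^ 2) := by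
  refine Summable.of_nonneg_of_le (fun k => ?_) (fun k => ?_)
      (Real.summable_pow_div_factorial ((x / 2) ^ 2))
  · rw [pow_mul]; positivity
  · rw [pow_mul]
    have h1 : (1 : ℝ) ≤ (Nat.factorial k : ℝ) := by
      exact_mod_cast Nat.one_le_iff_ne_zero.mpr (Nat.factorial_ne_zero k)
    gcongr
    nlinarith

lemma besselI0_hasSum (x : ℝ) :
    HasSum (fun k : ℕ => (x / 2) ^ (2 * k) / ((Nat.factorial k : ℝ)) ^ 2) (besselI0 x) :=
  (besselI0_summable x).hasSum

lemma besselI0_pos (t : ℝ) : 0 < besselI0 t := by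
  have h := besselI0_hasSum t
  have h1 : (t / 2) ^ (2 * 0) / ((Nat.factorial 0 : ℝ)) ^ 2 ≤ besselI0 t :=
    le_hasSum h 0 (fun k _ => by rw [pow_mul]; positivity)
  simp at h1
  linarith

lemma integral_cos_pow_even' (k : ℕ) :
    ∫ θ in (0:ℝ)..π, Real.cos θ ^ (2 * k) =
      π * (Nat.factorial (2 * k) : ℝ) / (4 ^ k * ((Nat.factorial k : ℝ)) ^ 2) := by
  induction k with
  | zero => simp
  | succ k ih =>
    rw [show 2 * (k + 1) = 2 * k + 2 by ring, integral_cos_pow, ih]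
    rw [Real.sin_pi, Real.sin_zero]
    have e1 : (Nat.factorial (2 * k + 2) : ℝ)
        = (2 * k + 2) * ((2 * k + 1) * (Nat.factorial (2 * k) : ℝ)) := by
      rw [show 2 * k + 2 = (2 * k + 1) + 1 by ring, Nat.factorial_succ, Nat.factorial_succ]
      push_cast; ring
    have e2 : (Nat.factorial (k + 1) : ℝ) = (k + 1) * (Nat.factorial k : ℝ) := by
      rw [Nat.factorial_succ]; push_cast; ring
    have hf : (Nat.factorial k : ℝ) ≠ 0 := by
      exact_mod_cast Nat.factorial_ne_zero k
    have h4 : (4 : ℝ) ^ k ≠ 0 := by positivity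
    rw [e1, e2]
    have hk2 : (2 * (k : ℝ) + 2) ≠ 0 := by positivity
    field_simp
    push_cast
    ring
  
lemma integral_cos_pow_odd' (k : ℕ) :
    ∫ θ in (0:ℝ)..π, Real.cos θ ^ (2 * k + 1) = 0 := by
  induction k with
  | zero => simp
  | succ k ih =>
    rw [show 2 * (k + 1) + 1 = (2 * k + 1) + 2 by ring, integral_cos_pow, ih]
    simp

lemma besselI0_pi (t : ℝ) :
    π * besselI0 t = ∫ θ in (0:ℝ)..π, Real.exp (t * Real.cos θ) := by
  have h0π : (0:ℝ) ≤ π := pi_pos.le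
  set F : ℕ → ℝ → ℝ := fun n θ => (t * Real.cos θ) ^ n / (Nat.factorial n : ℝ) with hF
  have hFi : ∀ n, Integrable (F n) (volume.restrict (Set.Ioc 0 π)) := by
    intro n
    apply Continuous.integrableOn_Ioc
    fun_prop
  have hFbound : ∀ n, (∫ θ in Set.Ioc (0:ℝ) π, ‖F n θ‖) ≤ π * (|t| ^ n / (Nat.factorial n : ℝ)) := by
    intro n
    have hb : ∀ θ, ‖F n θ‖ ≤ |t| ^ n / (Nat.factorial n : ℝ) := by
      intro θ
      have hnn : ‖F n θ‖ = |t * Real.cos θ| ^ n / (Nat.factorial n : ℝ) := by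
        rw [hF]
        simp [abs_div, abs_pow, abs_mul, Nat.abs_cast]
      have habs : |t * Real.cos θ| ≤ |t| := by
        rw [abs_mul]
        nlinarith [Real.abs_cos_le_one θ, abs_nonneg t, abs_nonneg (Real.cos θ)]
      have h1 : |t * Real.cos θ| ^ n ≤ |t| ^ n := pow_le_pow_left₀ (abs_nonneg _) habs n
      have hfac : (0:ℝ) < (Nat.factorial n : ℝ) := by
        exact_mod_cast Nat.factorial_pos n
      rw [hnn]
      exact (div_le_div_iff_of_pos_right hfac).mpr h1
    calc (∫ θ in Set.Ioc (0:ℝ) π, ‖F n θ‖)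
        ≤ ∫ _θ in Set.Ioc (0:ℝ) π, |t| ^ n / (Nat.factorial n : ℝ) := by
          apply integral_mono (hFi n).norm _ (fun θ => hb θ)
          exact integrableOn_const (by simp [Real.volume_Ioc])
      _ = π * (|t| ^ n / (Nat.factorial n : ℝ)) := by
          rw [setIntegral_const, measureReal_def, Real.volume_Ioc, smul_eq_mul]
          rw [ENNReal.toReal_ofReal (by linarith)]
          ring_nf
  have hFsum : Summable (fun n => ∫ θ in Set.Ioc (0:ℝ) π, ‖F n θ‖) := by
    refine Summable.of_nonneg_of_le (fun n => ?_) hFbound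
      ((Real.summable_pow_div_factorial |t|).mul_left π)
    exact integral_nonneg fun θ => norm_nonneg _
  have hswap := MeasureTheory.hasSum_integral_of_summable_integral_norm hFi hFsum
  have hA : ∀ n, (∫ θ in Set.Ioc (0:ℝ) π, F n θ)
      = (t ^ n / (Nat.factorial n : ℝ)) * ∫ θ in (0:ℝ)..π, Real.cos θ ^ n := by
    intro n
    rw [← intervalIntegral.integral_of_le h0π, ← intervalIntegral.integral_const_mul]
    apply intervalIntegral.integral_congr
    intro θ _
    rw [hF]
    simp [mul_pow]
    ring
  have h2 : HasSum ((fun n => ∫ θ in Set.Ioc (0:ℝ) π, F n θ) ∘ (fun k : ℕ => 2 * k))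
      (π * besselI0 t) := by
    have hm := (besselI0_hasSum t).mul_left π
    convert hm using 1
    · rfl
    funext k
    simp only [Function.comp]
    rw [hA, integral_cos_pow_even']
    have hf2 : (Nat.factorial (2 * k) : ℝ) ≠ 0 := by exact_mod_cast Nat.factorial_ne_zero _
    have hf : (Nat.factorial k : ℝ) ≠ 0 := by exact_mod_cast Nat.factorial_ne_zero k
    have h4 : (4 : ℝ) ^ k ≠ 0 := by positivity
    have hpow : (t / 2) ^ (2 * k) = t ^ (2 * k) / 4 ^ k := by
      rw [div_pow, show ((2:ℝ))^(2*k) = 4 ^ k by rw [pow_mul]; norm_num]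
    rw [hpow]
    field_simp
  have hodd : ∀ n ∉ Set.range (fun k : ℕ => 2 * k),
      (fun n => ∫ θ in Set.Ioc (0:ℝ) π, F n θ) n = 0 := by
    intro n hn
    have : ¬ Even n := by
      intro ⟨r, hr⟩
      exact hn ⟨r, show 2 * r = n by omega⟩
    obtain ⟨k, hk⟩ := Nat.not_even_iff_odd.mp this
    rw [hk]
    show (∫ θ in Set.Ioc (0:ℝ) π, F (2 * k + 1) θ) = 0
    rw [hA, integral_cos_pow_odd', mul_zero]
  have hinj : Function.Injective (fun k : ℕ => 2 * k) := fun a b h => by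
    dsimp at h; omega
  have h3 : HasSum (fun n => ∫ θ in Set.Ioc (0:ℝ) π, F n θ) (π * besselI0 t) :=
    (hinj.hasSum_iff hodd).mp h2
  have hmain := h3.unique hswap
  have hexp : ∀ θ : ℝ, (∑' n, F n θ) = Real.exp (t * Real.cos θ) := by
    intro θ
    rw [Real.exp_eq_exp_ℝ, NormedSpace.exp_eq_tsum_div]
  rw [hmain, intervalIntegral.integral_of_le h0π]
  exact setIntegral_congr_fun measurableSet_Ioc (fun θ _ => hexp θ)

theorem besselI0_ratio_gt_exp (lam x : ℝ) (hlam : 0 < lam) (hx : x ∈ Set.Ioo (0:ℝ) 1) :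
    besselI0 (Real.sqrt lam * x) / besselI0 (Real.sqrt lam) >
      Real.exp (-(Real.sqrt lam) * (1 - x)) := by
  obtain ⟨hx0, hx1⟩ := hx
  set s := Real.sqrt lam with hs
  have hspos : 0 < s := Real.sqrt_pos.mpr hlam
  have hab : s * x < s := by nlinarith
  have hIb : 0 < besselI0 s := besselI0_pos s
  rw [gt_iff_lt, lt_div_iff₀ hIb]
  have hkey : (∫ θ in (0:ℝ)..π, Real.exp (s * Real.cos θ) * Real.exp (s * x - s))
      < ∫ θ in (0:ℝ)..π, Real.exp (s * x * Real.cos θ) := by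
    apply intervalIntegral.integral_lt_integral_of_continuousOn_of_le_of_exists_lt pi_pos
    · fun_prop
    · fun_prop
    · intro θ _
      rw [← Real.exp_add]
      apply Real.exp_le_exp.mpr
      have hc : Real.cos θ ≤ 1 := Real.cos_le_one θ
      nlinarith [mul_nonneg (sub_pos.mpr hab).le (sub_nonneg.mpr hc)]
    · refine ⟨π / 2, ⟨by positivity, by linarith [pi_pos]⟩, ?_⟩
      rw [Real.cos_pi_div_two, ← Real.exp_add]
      apply Real.exp_lt_exp.mpr
      nlinarith
  rw [intervalIntegral.integral_mul_const, ← besselI0_pi, ← besselI0_pi] at hkey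
  rw [mul_assoc] at hkey
  have h2 : besselI0 s * Real.exp (s * x - s) < besselI0 (s * x) :=
    lt_of_mul_lt_mul_left hkey pi_pos.le
  have heq : -s * (1 - x) = s * x - s := by ring
  rw [heq, mul_comm]
  exact h2
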